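/- Let K ⊆ ℝ^d be a compact λ-strongly convex set. For nonzero vectors p, q ∈ ℝ^d, let x_p = argmax_{x ∈ K} ⟨p, x⟩ and x_q = argmax_{x ∈ K} ⟨q, x⟩. Then ‖x_p − x_q‖ ≤ 2‖p − q‖ / (λ(‖p‖ + ‖q‖)). -/

import Mathlib

open scoped RealInnerProductSpace

/-- Key lemma: on a strongly convex set, the maximizer of `⟪p, ·⟫` satisfies a
quadratic growth inequality. -/
theorem key_str_cvx {d : ℕ} {K : Set (EuclideanSpace ℝ (Fin d))} {lam : ℝ} (hlam : 0 < lam)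
    (hK : ∀ u ∈ K, ∀ v ∈ K, ∀ θ : ℝ, θ ∈ Set.Icc (0:ℝ) 1 →
      Metric.closedBall (θ • u + (1 - θ) • v) (θ * (1 - θ) * (lam / 2) * ‖u - v‖ ^ 2) ⊆ K)
    {p xp : EuclideanSpace ℝ (Fin d)} (hp : p ≠ 0)
    (hxpK : xp ∈ K) (hmax : ∀ x ∈ K, ⟪p, x⟫ ≤ ⟪p, xp⟫) :
    ∀ x ∈ K, lam / 2 * ‖p‖ * ‖xp - x‖ ^ 2 ≤ ⟪p, xp - x⟫ := by
  intro x hx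
  set c : ℝ := lam / 2 * ‖p‖ * ‖xp - x‖ ^ 2 with hc_def
  have hc : 0 ≤ c := by positivity
  set A : ℝ := ⟪p, xp⟫ - ⟪p, x⟫ with hA_def
  have hA : 0 ≤ A := sub_nonneg.mpr (hmax x hx)
  have hpnorm : 0 < ‖p‖ := norm_pos_iff.mpr hp
  have hstep : ∀ θ : ℝ, θ ∈ Set.Ico (0:ℝ) 1 → θ * c ≤ A := by
    intro θ hθ
    have hθ1 : (0:ℝ) ≤ 1 - θ := by linarith [hθ.2]
    set r : ℝ := θ * (1 - θ) * (lam / 2) * ‖xp - x‖ ^ 2 with hr_def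
    have hr : 0 ≤ r := by
      apply mul_nonneg
      apply mul_nonneg
      exact mul_nonneg hθ.1 hθ1
      positivity
      positivity
    have hball := hK xp hxpK x hx θ ⟨hθ.1, le_of_lt hθ.2⟩
    set z : EuclideanSpace ℝ (Fin d) :=
      (θ • xp + (1 - θ) • x) + r • (‖p‖⁻¹ • p) with hz_def
    have hzK : z ∈ K := by
      apply hball
      rw [Metric.mem_closedBall, dist_eq_norm]
      have : z - (θ • xp + (1 - θ) • x) = r • (‖p‖⁻¹ • p) := by
        rw [hz_def]; abel
      rw [this, norm_smul, norm_smul, norm_inv, norm_norm, Real.norm_eq_abs,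
        abs_of_nonneg hr, inv_mul_cancel₀ (ne_of_gt hpnorm), mul_one]
    have hle := hmax z hzK
    have hexp : ⟪p, z⟫ = θ * ⟪p, xp⟫ + (1 - θ) * ⟪p, x⟫ + r * ‖p‖ := by
      rw [hz_def, inner_add_right, inner_add_right, real_inner_smul_right,
        real_inner_smul_right, real_inner_smul_right, real_inner_smul_right,
        real_inner_self_eq_norm_sq]
      field_simp
    rw [hexp] at hle
    have h2 : θ * (1 - θ) * c ≤ (1 - θ) * A := by
      rw [hc_def, hA_def, hr_def] at *
      nlinarith [hle]
    rcases eq_or_lt_of_le hθ1 with h | h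
    · -- 1 - θ = 0 impossible since θ < 1
      exfalso; linarith [hθ.2]
    · have := (mul_le_mul_iff_right₀ h).mp (by linarith [h2] : (1 - θ) * (θ * c) ≤ (1 - θ) * A)
      linarith
  -- conclude c ≤ A
  have hcA : c ≤ A := by
    by_contra hcon
    push_neg at hcon
    have hcpos : 0 < c := lt_of_le_of_lt hA hcon
    have hθmem : (A + c) / (2 * c) ∈ Set.Ico (0:ℝ) 1 := by
      constructor
      · positivity
      · rw [div_lt_one (by positivity)]; linarith
    have := hstep _ hθmem
    rw [div_mul_eq_mul_div, mul_comm (A + c) c, div_le_iff₀ (by positivity : (0:ℝ) < 2 * c)] at this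
    nlinarith
  calc c ≤ A := hcA
    _ = ⟪p, xp - x⟫ := by rw [hA_def, inner_sub_right]

/-- Lipschitzness of the linear-maximization oracle on a `λ`-strongly convex compact set. -/
theorem stmt_5 {d : ℕ} (K : Set (EuclideanSpace ℝ (Fin d)))
    (hKc : IsCompact K) (lam : ℝ) (hlam : 0 < lam)
    (hK : ∀ u ∈ K, ∀ v ∈ K, ∀ θ : ℝ, θ ∈ Set.Icc (0:ℝ) 1 →
      Metric.closedBall (θ • u + (1 - θ) • v) (θ * (1 - θ) * (lam / 2) * ‖u - v‖ ^ 2) ⊆ K)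
    (p q xp xq : EuclideanSpace ℝ (Fin d)) (hp : p ≠ 0) (hq : q ≠ 0)
    (hxp : xp ∈ K ∧ ∀ x ∈ K, ⟪p, x⟫ ≤ ⟪p, xp⟫)
    (hxq : xq ∈ K ∧ ∀ x ∈ K, ⟪q, x⟫ ≤ ⟪q, xq⟫) :
    ‖xp - xq‖ ≤ 2 * ‖p - q‖ / (lam * (‖p‖ + ‖q‖)) := by
  have hpnorm : 0 < ‖p‖ := norm_pos_iff.mpr hp
  have hqnorm : 0 < ‖q‖ := norm_pos_iff.mpr hq
  have h1 := key_str_cvx hlam hK hp hxp.1 hxp.2 xq hxq.1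
  have h2 := key_str_cvx hlam hK hq hxq.1 hxq.2 xp hxp.1
  have hnormsym : ‖xq - xp‖ = ‖xp - xq‖ := norm_sub_rev _ _
  rw [hnormsym] at h2
  have he2 : ⟪q, xq - xp⟫ = -⟪q, xp - xq⟫ := by
    rw [show xq - xp = -(xp - xq) by abel, inner_neg_right]
  rw [he2] at h2
  have he1 : ⟪p - q, xp - xq⟫ = ⟪p, xp - xq⟫ - ⟪q, xp - xq⟫ := by
    rw [inner_sub_left]
  have hcs := real_inner_le_norm (p - q) (xp - xq)
  set D : ℝ := ‖xp - xq‖ with hD_def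
  have hDnn : 0 ≤ D := norm_nonneg _
  have hmain : lam / 2 * (‖p‖ + ‖q‖) * D ^ 2 ≤ ‖p - q‖ * D := by
    nlinarith [h1, h2, hcs, he1]
  rcases eq_or_lt_of_le hDnn with h | h
  · rw [← h]; positivity
  · rw [le_div_iff₀ (by positivity)]
    nlinarith [hmain]
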